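/- Let X be a Banach space. The set PAA(X) of pseudo-almost automorphic functions is a closed subspace of the Banach space BC(ℝ,X) of bounded continuous functions with the sup norm; in particular, if (f_n) ⊆ PAA(X) converges uniformly on ℝ to f, then f ∈ PAA(X), and PAA(X) equipped with the sup norm is a Banach space. -/

import Mathlib

open MeasureTheory Filter Topology Bornology

noncomputable section

/-- A continuous function `f : ℝ → Z` is almost automorphic if for every sequence of reals
there is a subsequence `s ∘ k` and a function `g` with `f (t + s (k n)) → g t` and
`g (t - s (k n)) → f t` pointwise in norm. -/
def AlmostAutomorphicFn {Z : Type*} [NormedAddCommGroup Z] (f : ℝ → Z) : Prop :=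
  Continuous f ∧ ∀ s' : ℕ → ℝ, ∃ k : ℕ → ℕ, StrictMono k ∧ ∃ g : ℝ → Z,
    (∀ t : ℝ, Tendsto (fun n => f (t + s' (k n))) atTop (𝓝 (g t))) ∧
    (∀ t : ℝ, Tendsto (fun n => g (t - s' (k n))) atTop (𝓝 (f t)))

/-- `PAPZeroFn f` : `f` is bounded continuous and `(1/(2r)) ∫_{-r}^r ‖f s‖ ds → 0` as `r → ∞`. -/
def PAPZeroFn {Z : Type*} [NormedAddCommGroup Z] (f : ℝ → Z) : Prop :=
  Continuous f ∧ (∃ M : ℝ, ∀ t : ℝ, ‖f t‖ ≤ M) ∧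
  Tendsto (fun r : ℝ => (1 / (2 * r)) * ∫ s in (-r)..r, ‖f s‖) atTop (𝓝 0)

/-- A bounded continuous function is pseudo-almost automorphic if it decomposes as the sum of
an almost automorphic function and an ergodic (`PAPZeroFn`) perturbation. -/
def PseudoAlmostAutomorphicFn {Z : Type*} [NormedAddCommGroup Z] (f : ℝ → Z) : Prop :=
  Continuous f ∧ (∃ M : ℝ, ∀ t : ℝ, ‖f t‖ ≤ M) ∧
  ∃ g φ : ℝ → Z, AlmostAutomorphicFn g ∧ PAPZeroFn φ ∧ ∀ t : ℝ, f t = g t + φ t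

namespace PAAHelp

variable {Z : Type*} [NormedAddCommGroup Z]

theorem aa_zero : AlmostAutomorphicFn (fun _ : ℝ => (0 : Z)) :=
  ⟨continuous_const, fun _ => ⟨id, strictMono_id, fun _ => 0,
    fun _ => tendsto_const_nhds, fun _ => tendsto_const_nhds⟩⟩

theorem aa_add {f g : ℝ → Z} (hf : AlmostAutomorphicFn f) (hg : AlmostAutomorphicFn g) :
    AlmostAutomorphicFn (fun t => f t + g t) := by
  refine ⟨hf.1.add hg.1, fun s' => ?_⟩
  obtain ⟨k₁, hk₁, F, hF1, hF2⟩ := hf.2 s'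
  obtain ⟨k₂, hk₂, G, hG1, hG2⟩ := hg.2 (s' ∘ k₁)
  refine ⟨k₁ ∘ k₂, hk₁.comp hk₂, fun t => F t + G t, fun t => ?_, fun t => ?_⟩
  · exact ((hF1 t).comp hk₂.tendsto_atTop).add (hG1 t)
  · exact ((hF2 t).comp hk₂.tendsto_atTop).add (hG2 t)

theorem aa_neg {f : ℝ → Z} (hf : AlmostAutomorphicFn f) :
    AlmostAutomorphicFn (fun t => -(f t)) := by
  refine ⟨hf.1.neg, fun s' => ?_⟩
  obtain ⟨k, hk, F, hF1, hF2⟩ := hf.2 s'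
  exact ⟨k, hk, fun t => -(F t), fun t => (hF1 t).neg, fun t => (hF2 t).neg⟩

theorem aa_sub {f g : ℝ → Z} (hf : AlmostAutomorphicFn f) (hg : AlmostAutomorphicFn g) :
    AlmostAutomorphicFn (fun t => f t - g t) := by
  have := aa_add hf (aa_neg hg)
  simpa [sub_eq_add_neg] using this

theorem aa_smul {Z : Type*} [NormedAddCommGroup Z] [NormedSpace ℝ Z]
    {f : ℝ → Z} (a : ℝ) (hf : AlmostAutomorphicFn f) :
    AlmostAutomorphicFn (fun t => a • f t) := by
  refine ⟨hf.1.const_smul a, fun s' => ?_⟩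
  obtain ⟨k, hk, F, hF1, hF2⟩ := hf.2 s'
  exact ⟨k, hk, fun t => a • F t, fun t => (hF1 t).const_smul a,
    fun t => (hF2 t).const_smul a⟩

theorem papzero_zero : PAPZeroFn (fun _ : ℝ => (0 : Z)) := by
  refine ⟨continuous_const, ⟨0, fun t => by simp⟩, ?_⟩
  have : (fun r : ℝ => (1 / (2 * r)) * ∫ s in (-r)..r, ‖(0 : Z)‖) = fun _ => 0 := by
    funext r; simp
  rw [this]; exact tendsto_const_nhds

theorem papzero_mean_nonneg {φ : ℝ → Z} (r : ℝ) (hr : 0 ≤ r) :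
    0 ≤ (1 / (2 * r)) * ∫ s in (-r)..r, ‖φ s‖ := by
  have h1 : (0:ℝ) ≤ 1 / (2 * r) := by positivity
  have h2 : (0:ℝ) ≤ ∫ s in (-r)..r, ‖φ s‖ :=
    intervalIntegral.integral_nonneg (by linarith) (fun x _ => norm_nonneg _)
  positivity

theorem papzero_add {φ ψ : ℝ → Z} (hφ : PAPZeroFn φ) (hψ : PAPZeroFn ψ) :
    PAPZeroFn (fun t => φ t + ψ t) := by
  obtain ⟨hφc, ⟨M₁, hM₁⟩, hφm⟩ := hφ
  obtain ⟨hψc, ⟨M₂, hM₂⟩, hψm⟩ := hψ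
  refine ⟨hφc.add hψc, ⟨M₁ + M₂, fun t => (norm_add_le _ _).trans (add_le_add (hM₁ t) (hM₂ t))⟩, ?_⟩
  have hsum : Tendsto (fun r : ℝ => ((1 / (2 * r)) * ∫ s in (-r)..r, ‖φ s‖)
      + ((1 / (2 * r)) * ∫ s in (-r)..r, ‖ψ s‖)) atTop (𝓝 0) := by
    simpa using hφm.add hψm
  refine tendsto_of_tendsto_of_tendsto_of_le_of_le' tendsto_const_nhds hsum ?_ ?_
  · filter_upwards [eventually_ge_atTop (0:ℝ)] with r hr
    exact papzero_mean_nonneg r hr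
  · filter_upwards [eventually_ge_atTop (0:ℝ)] with r hr
    have h1 : (0:ℝ) ≤ 1 / (2 * r) := by positivity
    have hint : (∫ s in (-r)..r, ‖φ s + ψ s‖) ≤
        (∫ s in (-r)..r, ‖φ s‖) + ∫ s in (-r)..r, ‖ψ s‖ := by
      rw [← intervalIntegral.integral_add (hφc.norm.intervalIntegrable _ _)
        (hψc.norm.intervalIntegrable _ _)]
      exact intervalIntegral.integral_mono_on (by linarith)
        ((hφc.add hψc).norm.intervalIntegrable _ _)
        ((hφc.norm.add hψc.norm).intervalIntegrable _ _)
        (fun x _ => norm_add_le _ _)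
    calc (1 / (2 * r)) * ∫ s in (-r)..r, ‖φ s + ψ s‖
        ≤ (1 / (2 * r)) * ((∫ s in (-r)..r, ‖φ s‖) + ∫ s in (-r)..r, ‖ψ s‖) :=
          mul_le_mul_of_nonneg_left hint h1
      _ = _ := by ring

theorem papzero_neg {φ : ℝ → Z} (hφ : PAPZeroFn φ) : PAPZeroFn (fun t => -(φ t)) := by
  obtain ⟨hc, ⟨M, hM⟩, hm⟩ := hφ
  exact ⟨hc.neg, ⟨M, fun t => by simpa using hM t⟩, by simpa using hm⟩

theorem papzero_sub {φ ψ : ℝ → Z} (hφ : PAPZeroFn φ) (hψ : PAPZeroFn ψ) :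
    PAPZeroFn (fun t => φ t - ψ t) := by
  have := papzero_add hφ (papzero_neg hψ)
  simpa [sub_eq_add_neg] using this

theorem papzero_smul {Z : Type*} [NormedAddCommGroup Z] [NormedSpace ℝ Z]
    {φ : ℝ → Z} (a : ℝ) (hφ : PAPZeroFn φ) : PAPZeroFn (fun t => a • φ t) := by
  obtain ⟨hc, ⟨M, hM⟩, hm⟩ := hφ
  refine ⟨hc.const_smul a, ⟨|a| * M, fun t => by
    rw [norm_smul]; exact mul_le_mul_of_nonneg_left (hM t) (abs_nonneg a)⟩, ?_⟩
  have : (fun r : ℝ => (1 / (2 * r)) * ∫ s in (-r)..r, ‖a • φ s‖)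
      = fun r : ℝ => |a| * ((1 / (2 * r)) * ∫ s in (-r)..r, ‖φ s‖) := by
    funext r
    have : (fun s => ‖a • φ s‖) = fun s => |a| * ‖φ s‖ := by
      funext s; rw [norm_smul, Real.norm_eq_abs]
    rw [this, intervalIntegral.integral_const_mul]; ring
  rw [this]
  simpa using hm.const_mul |a|


variable {Z : Type*} [NormedAddCommGroup Z]

theorem papzero_unif {φ : ℕ → ℝ → Z} {Φ : ℝ → Z} (hφ : ∀ n, PAPZeroFn (φ n))
    (hΦc : Continuous Φ) (hΦb : ∃ M : ℝ, ∀ t, ‖Φ t‖ ≤ M)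
    (hu : ∀ ε > 0, ∃ N, ∀ n ≥ N, ∀ t, ‖φ n t - Φ t‖ ≤ ε) : PAPZeroFn Φ := by
  refine ⟨hΦc, hΦb, ?_⟩
  rw [Metric.tendsto_atTop]
  intro ε hε
  obtain ⟨N, hN⟩ := hu (ε/4) (by linarith)
  have hd : ∀ t, ‖Φ t‖ ≤ ‖φ N t‖ + ε/4 := by
    intro t
    have h1 := hN N le_rfl t
    have h2 := norm_sub_norm_le (Φ t) (φ N t)
    rw [norm_sub_rev] at h2
    linarith
  have hm := (hφ N).2.2
  rw [Metric.tendsto_atTop] at hm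
  obtain ⟨R, hR⟩ := hm (ε/4) (by linarith)
  refine ⟨max R 1, fun r hr => ?_⟩
  have hr1 : (1:ℝ) ≤ r := le_trans (le_max_right _ _) hr
  have hrR : R ≤ r := le_trans (le_max_left _ _) hr
  have hr0 : (0:ℝ) < r := by linarith
  have hmn : (1 / (2 * r)) * ∫ s in (-r)..r, ‖φ N s‖ < ε/4 := by
    have := hR r hrR
    rw [Real.dist_eq, sub_zero] at this
    exact lt_of_le_of_lt (le_abs_self _) this
  have hint : (∫ s in (-r)..r, ‖Φ s‖) ≤ (∫ s in (-r)..r, ‖φ N s‖) + (2*r) * (ε/4) := by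
    have h1 : (∫ s in (-r)..r, ‖Φ s‖) ≤ ∫ s in (-r)..r, (‖φ N s‖ + ε/4) := by
      refine intervalIntegral.integral_mono_on (by linarith)
        (hΦc.norm.intervalIntegrable _ _)
        (((hφ N).1.norm.add continuous_const).intervalIntegrable _ _)
        (fun x _ => hd x)
    have h2 : (∫ s in (-r)..r, (‖φ N s‖ + ε/4))
        = (∫ s in (-r)..r, ‖φ N s‖) + (2*r) * (ε/4) := by
      rw [intervalIntegral.integral_add ((hφ N).1.norm.intervalIntegrable _ _)
        (intervalIntegrable_const)]
      simp [intervalIntegral.integral_const]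
      ring
    linarith
  have hnn : (0:ℝ) ≤ (1 / (2 * r)) * ∫ s in (-r)..r, ‖Φ s‖ := by
    have h2 : (0:ℝ) ≤ ∫ s in (-r)..r, ‖Φ s‖ :=
      intervalIntegral.integral_nonneg (by linarith) (fun x _ => norm_nonneg _)
    positivity
  rw [Real.dist_eq, sub_zero, abs_of_nonneg hnn]
  have hfrac : (1 / (2 * r)) * ((∫ s in (-r)..r, ‖φ N s‖) + (2*r) * (ε/4))
      = ((1 / (2 * r)) * ∫ s in (-r)..r, ‖φ N s‖) + ε/4 := by
    field_simp
  calc (1 / (2 * r)) * ∫ s in (-r)..r, ‖Φ s‖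
      ≤ (1 / (2 * r)) * ((∫ s in (-r)..r, ‖φ N s‖) + (2*r) * (ε/4)) :=
        mul_le_mul_of_nonneg_left hint (by positivity)
    _ = ((1 / (2 * r)) * ∫ s in (-r)..r, ‖φ N s‖) + ε/4 := hfrac
    _ < ε/4 + ε/4 := by linarith
    _ < ε := by linarith

/-- Dependent strong recursion producing a sequence of reals. -/
def depRec (F : ∀ n : ℕ, (∀ j, j < n → ℝ) → ℝ) : ℕ → ℝ :=
  fun n => F n (fun j _ => depRec F j)
termination_by n => n
decreasing_by exact ‹_›

theorem depRec_eq (F : ∀ n : ℕ, (∀ j, j < n → ℝ) → ℝ) (n : ℕ) :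
    depRec F n = F n (fun j _ => depRec F j) := by
  rw [depRec]

variable {Z : Type*} [NormedAddCommGroup Z]

theorem aa_unif {Z : Type*} [NormedAddCommGroup Z] [CompleteSpace Z] {g : ℕ → ℝ → Z} {G : ℝ → Z}
    (hg : ∀ n, AlmostAutomorphicFn (g n)) (hGc : Continuous G)
    (hu : ∀ ε > 0, ∃ N, ∀ n ≥ N, ∀ t, ‖g n t - G t‖ ≤ ε) :
    AlmostAutomorphicFn G := by
  refine ⟨hGc, fun s' => ?_⟩
  -- nested subsequences
  let K : ℕ → ℕ → ℕ := fun n => Nat.rec ((hg 0).2 s').choose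
    (fun n Kn => Kn ∘ ((hg (n+1)).2 (s' ∘ Kn)).choose) n
  have hKs : ∀ n, K (n+1) = K n ∘ ((hg (n+1)).2 (s' ∘ K n)).choose := fun n => rfl
  have hKmono : ∀ n, StrictMono (K n) := by
    intro n
    induction n with
    | zero => exact ((hg 0).2 s').choose_spec.1
    | succ n ih =>
      rw [hKs n]
      exact ih.comp ((hg (n+1)).2 (s' ∘ K n)).choose_spec.1
  have hKconv : ∀ n, ∃ gb : ℝ → Z,
      (∀ t, Tendsto (fun m => g n (t + s' (K n m))) atTop (𝓝 (gb t))) ∧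
      (∀ t, Tendsto (fun m => gb (t - s' (K n m))) atTop (𝓝 (g n t))) := by
    intro n
    cases n with
    | zero => exact ((hg 0).2 s').choose_spec.2
    | succ n => exact ((hg (n+1)).2 (s' ∘ K n)).choose_spec.2
  have hrel : ∀ n m, n ≤ m → ∃ e : ℕ → ℕ, StrictMono e ∧ ∀ j, K m j = K n (e j) := by
    intro n m h
    induction m, h using Nat.le_induction with
    | base => exact ⟨id, strictMono_id, fun j => rfl⟩
    | succ m hm ih =>
      obtain ⟨e, he, hKe⟩ := ih
      refine ⟨e ∘ ((hg (m+1)).2 (s' ∘ K m)).choose,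
        he.comp ((hg (m+1)).2 (s' ∘ K m)).choose_spec.1, fun j => ?_⟩
      rw [hKs m]
      exact hKe _
  -- the diagonal
  set d : ℕ → ℕ := fun n => K n n with hd
  have hdmono : StrictMono d := by
    have hstep : ∀ n, d n < d (n+1) := by
      intro n
      have h1 : K (n+1) (n+1) = K n (((hg (n+1)).2 (s' ∘ K n)).choose (n+1)) := by
        rw [hKs n]; rfl
      have h2 : n + 1 ≤ ((hg (n+1)).2 (s' ∘ K n)).choose (n+1) :=
        ((hg (n+1)).2 (s' ∘ K n)).choose_spec.1.id_le (n+1)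
      calc d n = K n n := rfl
        _ < K n (n+1) := (hKmono n) (Nat.lt_succ_self n)
        _ ≤ K n (((hg (n+1)).2 (s' ∘ K n)).choose (n+1)) := (hKmono n).monotone h2
        _ = d (n+1) := h1.symm
    exact strictMono_nat_of_lt_succ hstep
  have key : ∀ (n : ℕ) (a : ℕ → Z) (L : Z),
      Tendsto (fun m => a (K n m)) atTop (𝓝 L) → Tendsto (fun m => a (d m)) atTop (𝓝 L) := by
    intro n a L hconv
    set E : ℕ → ℕ := fun m => if h : n ≤ m then (hrel n m h).choose m else 0 with hE
    have hEv : ∀ᶠ m in atTop, a (d m) = a (K n (E m)) := by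
      filter_upwards [eventually_ge_atTop n] with m hm
      have := (hrel n m hm).choose_spec.2 m
      simp only [hE, dif_pos hm]
      exact congrArg a this
    have hEatTop : Tendsto E atTop atTop := by
      refine tendsto_atTop_mono' _ ?_ tendsto_id
      filter_upwards [eventually_ge_atTop n] with m hm
      simp only [hE, dif_pos hm]
      exact (hrel n m hm).choose_spec.1.id_le m
    exact (hconv.comp hEatTop).congr' (by filter_upwards [hEv] with m h using h.symm)
  -- the approximating limit functions
  set gb : ℕ → ℝ → Z := fun n => (hKconv n).choose with hgbdef
  have conv1 : ∀ n t, Tendsto (fun m => g n (t + s' (d m))) atTop (𝓝 (gb n t)) :=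
    fun n t => key n (fun j => g n (t + s' j)) _ ((hKconv n).choose_spec.1 t)
  have conv2 : ∀ n t, Tendsto (fun m => gb n (t - s' (d m))) atTop (𝓝 (g n t)) :=
    fun n t => key n (fun j => gb n (t - s' j)) _ ((hKconv n).choose_spec.2 t)
  -- Cauchy estimates
  have hdiff : ∀ (n m : ℕ) (c : ℝ), (∀ t', ‖g n t' - g m t'‖ ≤ c) →
      ∀ t, ‖gb n t - gb m t‖ ≤ c := by
    intro n m c hc t
    have h1 : Tendsto (fun j => ‖g n (t + s' (d j)) - g m (t + s' (d j))‖) atTop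
        (𝓝 ‖gb n t - gb m t‖) := ((conv1 n t).sub (conv1 m t)).norm
    exact le_of_tendsto' h1 (fun j => hc _)
  have hcau : ∀ ε > 0, ∃ N, ∀ n ≥ N, ∀ m ≥ N, ∀ t, ‖gb n t - gb m t‖ ≤ ε := by
    intro ε hε
    obtain ⟨N, hN⟩ := hu (ε/2) (by linarith)
    refine ⟨N, fun n hn m hm t => ?_⟩
    refine hdiff n m ε (fun t' => ?_) t
    have h1 := hN n hn t'
    have h2 := hN m hm t'
    calc ‖g n t' - g m t'‖ = ‖(g n t' - G t') - (g m t' - G t')‖ := by abel_nf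
      _ ≤ ‖g n t' - G t'‖ + ‖g m t' - G t'‖ := norm_sub_le _ _
      _ ≤ ε/2 + ε/2 := add_le_add h1 h2
      _ = ε := by ring
  have hcs : ∀ t, ∃ L : Z, Tendsto (fun n => gb n t) atTop (𝓝 L) := by
    intro t
    apply cauchySeq_tendsto_of_complete
    rw [Metric.cauchySeq_iff']
    intro ε hε
    obtain ⟨N, hN⟩ := hcau (ε/2) (by linarith)
    refine ⟨N, fun n hn => ?_⟩
    rw [dist_eq_norm]
    exact lt_of_le_of_lt (hN n hn N le_rfl t) (by linarith)
  set Gb : ℝ → Z := fun t => (hcs t).choose with hGbdef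
  have hGb : ∀ t, Tendsto (fun n => gb n t) atTop (𝓝 (Gb t)) := fun t => (hcs t).choose_spec
  have hGa : ∀ ε > 0, ∃ N, ∀ n ≥ N, ∀ t, ‖gb n t - Gb t‖ ≤ ε := by
    intro ε hε
    obtain ⟨N, hN⟩ := hcau ε hε
    refine ⟨N, fun n hn t => ?_⟩
    have h1 : Tendsto (fun m => ‖gb n t - gb m t‖) atTop (𝓝 ‖gb n t - Gb t‖) :=
      (tendsto_const_nhds.sub (hGb t)).norm
    refine le_of_tendsto h1 ?_
    filter_upwards [eventually_ge_atTop N] with m hm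
    exact hN n hn m hm t
  refine ⟨d, hdmono, Gb, fun t => ?_, fun t => ?_⟩
  · rw [Metric.tendsto_atTop]
    intro ε hε
    obtain ⟨N₁, hN₁⟩ := hu (ε/4) (by linarith)
    obtain ⟨N₂, hN₂⟩ := hGa (ε/4) (by linarith)
    set n := max N₁ N₂ with hn
    have hc := conv1 n t
    rw [Metric.tendsto_atTop] at hc
    obtain ⟨M, hM⟩ := hc (ε/4) (by linarith)
    refine ⟨M, fun m hm => ?_⟩
    have h2 := hM m hm
    have h1' : dist (G (t + s' (d m))) (g n (t + s' (d m))) ≤ ε/4 := by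
      rw [dist_eq_norm, norm_sub_rev]; exact hN₁ n (le_max_left _ _) (t + s' (d m))
    have h3' : dist (gb n t) (Gb t) ≤ ε/4 := by
      rw [dist_eq_norm]; exact hN₂ n (le_max_right _ _) t
    have h4 := dist_triangle4 (G (t + s' (d m))) (g n (t + s' (d m))) (gb n t) (Gb t)
    linarith
  · rw [Metric.tendsto_atTop]
    intro ε hε
    obtain ⟨N₁, hN₁⟩ := hu (ε/4) (by linarith)
    obtain ⟨N₂, hN₂⟩ := hGa (ε/4) (by linarith)
    set n := max N₁ N₂ with hn
    have hc := conv2 n t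
    rw [Metric.tendsto_atTop] at hc
    obtain ⟨M, hM⟩ := hc (ε/4) (by linarith)
    refine ⟨M, fun m hm => ?_⟩
    have h2 := hM m hm
    have h3' : dist (Gb (t - s' (d m))) (gb n (t - s' (d m))) ≤ ε/4 := by
      rw [dist_eq_norm, norm_sub_rev]; exact hN₂ n (le_max_right _ _) (t - s' (d m))
    have h1' : dist (g n t) (G t) ≤ ε/4 := by
      rw [dist_eq_norm]; exact hN₁ n (le_max_left _ _) t
    have h4 := dist_triangle4 (Gb (t - s' (d m))) (gb n (t - s' (d m))) (g n t) (G t)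
    linarith

/-- Key fact: if the mean of a nonneg continuous `h` over `[-r,r]` tends to 0, then for any
finitely many offsets `c j` and any `R₀` there is `a ≥ R₀` such that all the window integrals
`∫_{a + c j - 1}^{a + c j + 1} h` are small. -/
theorem window_small {h : ℝ → ℝ} (hc : Continuous h) (hnn : ∀ x, 0 ≤ h x)
    (hmean : Tendsto (fun r : ℝ => (1 / (2 * r)) * ∫ s in (-r)..r, h s) atTop (𝓝 0))
    (N : ℕ) (c : ℕ → ℝ) {ε : ℝ} (hε : 0 < ε) (R₀ : ℝ) :
    ∃ a : ℝ, R₀ ≤ a ∧ ∀ j < N, (∫ s in (a + c j - 1)..(a + c j + 1), h s) < ε := by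
  by_contra hcon
  push_neg at hcon
  -- basic integrability and primitives
  have hint : ∀ a b : ℝ, IntervalIntegrable h volume a b := fun a b => hc.intervalIntegrable a b
  set H : ℝ → ℝ := fun x => ∫ s in (0:ℝ)..x, h s with hHdef
  have hHdiff : ∀ x y : ℝ, H y - H x = ∫ s in x..y, h s := fun x y =>
    intervalIntegral.integral_interval_sub_left (hint 0 y) (hint 0 x)
  have hHmono : Monotone H := by
    intro x y hxy
    have h1 := hHdiff x y
    have h2 : (0:ℝ) ≤ ∫ s in x..y, h s :=
      intervalIntegral.integral_nonneg hxy (fun u _ => hnn u)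
    linarith
  have hHcont : Continuous H := intervalIntegral.continuous_primitive hint 0
  have hintH : ∀ a b : ℝ, IntervalIntegrable H volume a b := fun a b => hHcont.intervalIntegrable a b
  set G2 : ℝ → ℝ := fun x => ∫ s in (0:ℝ)..x, H s with hG2def
  have hG2diff : ∀ x y : ℝ, G2 y - G2 x = ∫ s in x..y, H s := fun x y =>
    intervalIntegral.integral_interval_sub_left (hintH 0 y) (hintH 0 x)
  -- window integral identity
  have hwin : ∀ x : ℝ, (∫ s in (x-1)..(x+1), h s) = H (x+1) - H (x-1) :=
    fun x => (hHdiff (x-1) (x+1)).symm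
  -- N = 0 is immediate
  rcases Nat.eq_zero_or_pos N with hN0 | hNpos
  · obtain ⟨j, hj, -⟩ := hcon R₀ le_rfl
    omega
  -- the sum of window integrals is bounded below by ε on [R₀, ∞)
  set S : ℝ → ℝ := fun a => ∑ j ∈ Finset.range N, ∫ s in (a + c j - 1)..(a + c j + 1), h s
    with hSdef
  have hSlb : ∀ a, R₀ ≤ a → ε ≤ S a := by
    intro a ha
    obtain ⟨j, hjN, hj⟩ := hcon a ha
    refine le_trans hj ?_
    refine Finset.single_le_sum (f := fun j => ∫ s in (a + c j - 1)..(a + c j + 1), h s)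
      (fun i _ => ?_) (Finset.mem_range.mpr hjN)
    exact intervalIntegral.integral_nonneg (by linarith) (fun u _ => hnn u)
  -- computing ∫_{R₁}^{R₂} of a translated window integral
  have hcomp : ∀ (d R₁ R₂ : ℝ),
      (∫ a in R₁..R₂, ∫ s in (a + d - 1)..(a + d + 1), h s)
        = (∫ x in (R₂ + d - 1)..(R₂ + d + 1), H x) - ∫ x in (R₁ + d - 1)..(R₁ + d + 1), H x := by
    intro d R₁ R₂
    have e1 : ∀ a : ℝ, (∫ s in (a + d - 1)..(a + d + 1), h s)
        = H (a + (d + 1)) - H (a + (d - 1)) := by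
      intro a
      rw [hwin (a + d)]
      congr 1 <;> · congr 1; ring
    have i1 : IntervalIntegrable (fun a => H (a + (d+1))) volume R₁ R₂ :=
      (hHcont.comp (continuous_id.add continuous_const)).intervalIntegrable _ _
    have i2 : IntervalIntegrable (fun a => H (a + (d-1))) volume R₁ R₂ :=
      (hHcont.comp (continuous_id.add continuous_const)).intervalIntegrable _ _
    calc (∫ a in R₁..R₂, ∫ s in (a + d - 1)..(a + d + 1), h s)
        = ∫ a in R₁..R₂, (H (a + (d + 1)) - H (a + (d - 1))) := by
          exact intervalIntegral.integral_congr (fun a _ => e1 a)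
      _ = (∫ a in R₁..R₂, H (a + (d + 1))) - ∫ a in R₁..R₂, H (a + (d - 1)) :=
          intervalIntegral.integral_sub i1 i2
      _ = (∫ x in (R₁+(d+1))..(R₂+(d+1)), H x) - ∫ x in (R₁+(d-1))..(R₂+(d-1)), H x := by
          rw [intervalIntegral.integral_comp_add_right H (d+1),
            intervalIntegral.integral_comp_add_right H (d-1)]
      _ = (G2 (R₂+(d+1)) - G2 (R₁+(d+1))) - (G2 (R₂+(d-1)) - G2 (R₁+(d-1))) := by
          rw [← hG2diff, ← hG2diff]
      _ = (G2 (R₂ + d + 1) - G2 (R₂ + d - 1)) - (G2 (R₁ + d + 1) - G2 (R₁ + d - 1)) := by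
          have a1 : R₂+(d+1) = R₂ + d + 1 := by ring
          have a2 : R₁+(d+1) = R₁ + d + 1 := by ring
          have a3 : R₂+(d-1) = R₂ + d - 1 := by ring
          have a4 : R₁+(d-1) = R₁ + d - 1 := by ring
          rw [a1, a2, a3, a4]; ring
      _ = _ := by rw [← hG2diff, ← hG2diff]
  -- bounding it
  have hAj : ∀ (d R₁ R₂ T : ℝ), R₁ ≤ R₂ → R₂ + d + 1 ≤ T → -T ≤ R₁ + d - 1 →
      (∫ a in R₁..R₂, ∫ s in (a + d - 1)..(a + d + 1), h s) ≤ 2 * (H T - H (-T)) := by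
    intro d R₁ R₂ T h12 hT1 hT2
    rw [hcomp]
    have b1 : (∫ x in (R₂ + d - 1)..(R₂ + d + 1), H x) ≤ 2 * H T := by
      have hle : ∀ x ∈ Set.Icc (R₂ + d - 1) (R₂ + d + 1), H x ≤ H T :=
        fun x hx => hHmono (le_trans hx.2 hT1)
      calc (∫ x in (R₂ + d - 1)..(R₂ + d + 1), H x)
          ≤ ∫ _ in (R₂ + d - 1)..(R₂ + d + 1), H T :=
            intervalIntegral.integral_mono_on (by linarith) (hintH _ _)
              intervalIntegrable_const hle
        _ = 2 * H T := by rw [intervalIntegral.integral_const, smul_eq_mul]; ring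
    have b2 : 2 * H (-T) ≤ ∫ x in (R₁ + d - 1)..(R₁ + d + 1), H x := by
      have hle : ∀ x ∈ Set.Icc (R₁ + d - 1) (R₁ + d + 1), H (-T) ≤ H x :=
        fun x hx => hHmono (le_trans hT2 hx.1)
      calc (2:ℝ) * H (-T) = ∫ _ in (R₁ + d - 1)..(R₁ + d + 1), H (-T) := by
            rw [intervalIntegral.integral_const, smul_eq_mul]; ring
        _ ≤ _ := intervalIntegral.integral_mono_on (by linarith) intervalIntegrable_const
              (hintH _ _) hle
    linarith
  -- set up the contradiction
  set C : ℝ := ∑ j ∈ Finset.range N, |c j| with hCdef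
  have hCnn : 0 ≤ C := Finset.sum_nonneg (fun j _ => abs_nonneg _)
  have hCb : ∀ j < N, |c j| ≤ C := by
    intro j hj
    exact Finset.single_le_sum (f := fun j => |c j|) (fun i _ => abs_nonneg _)
      (Finset.mem_range.mpr hj)
  set η : ℝ := ε / (8 * N) with hηdef
  have hηpos : 0 < η := by
    have : (0:ℝ) < N := by exact_mod_cast hNpos
    positivity
  rw [Metric.tendsto_atTop] at hmean
  obtain ⟨T₀, hT₀⟩ := hmean η hηpos
  set D : ℝ := |R₀| + C + 1 with hDdef
  set R : ℝ := 2*|R₀| + 2*D + |T₀| + 5 with hRdef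
  have hR0 : R₀ ≤ R := by
    have := abs_nonneg T₀; have := le_abs_self R₀; have := abs_nonneg R₀
    simp only [hRdef, hDdef]; linarith
  have hRpos : 0 ≤ R := by
    have := abs_nonneg T₀; have := abs_nonneg R₀
    simp only [hRdef, hDdef]; linarith
  set T : ℝ := R + |R₀| + C + 1 with hTdef
  have hTT₀ : T₀ ≤ T := by
    have := le_abs_self T₀; have := abs_nonneg R₀
    simp only [hTdef, hRdef, hDdef]; linarith
  have hTpos : (1:ℝ) ≤ T := by
    have := abs_nonneg R₀
    simp only [hTdef]; linarith
  -- the mean bound gives a bound on the full integral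
  have hIT : (∫ s in (-T)..T, h s) ≤ 2 * T * η := by
    have := hT₀ T hTT₀
    rw [Real.dist_eq, sub_zero] at this
    have h1 : (1 / (2 * T)) * ∫ s in (-T)..T, h s < η := lt_of_le_of_lt (le_abs_self _) this
    have h2 : (0:ℝ) < 2 * T := by linarith
    calc (∫ s in (-T)..T, h s) = (2*T) * ((1 / (2 * T)) * ∫ s in (-T)..T, h s) := by
          field_simp
      _ ≤ (2*T) * η := by nlinarith
  have hHT : H T - H (-T) = ∫ s in (-T)..T, h s := hHdiff (-T) T
  -- integrate the lower bound
  have hSint : ε * (R - R₀) ≤ ∫ a in R₀..R, S a := by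
    have h1 : (∫ a in R₀..R, (ε:ℝ)) = ε * (R - R₀) := by
      rw [intervalIntegral.integral_const, smul_eq_mul]; ring
    rw [← h1]
    refine intervalIntegral.integral_mono_on hR0 intervalIntegrable_const ?_
      (fun a ha => hSlb a ha.1)
    have : Continuous S := by
      refine continuous_finset_sum _ (fun j _ => ?_)
      have e1 : (fun a => ∫ s in (a + c j - 1)..(a + c j + 1), h s)
          = fun a => H (a + c j + 1) - H (a + c j - 1) := by
        funext a; exact hwin (a + c j)
      rw [e1]
      fun_prop
    exact this.intervalIntegrable _ _
  have hSub : (∫ a in R₀..R, S a) ≤ N * (2 * (H T - H (-T))) := by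
    have h1 : (∫ a in R₀..R, S a)
        = ∑ j ∈ Finset.range N, ∫ a in R₀..R, ∫ s in (a + c j - 1)..(a + c j + 1), h s := by
      refine intervalIntegral.integral_finset_sum (fun j _ => ?_)
      have e1 : (fun a => ∫ s in (a + c j - 1)..(a + c j + 1), h s)
          = fun a => H (a + c j + 1) - H (a + c j - 1) := by
        funext a; exact hwin (a + c j)
      rw [e1]
      apply Continuous.intervalIntegrable
      fun_prop
    rw [h1]
    have h2 : ∀ j ∈ Finset.range N,
        (∫ a in R₀..R, ∫ s in (a + c j - 1)..(a + c j + 1), h s) ≤ 2 * (H T - H (-T)) := by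
      intro j hj
      have hjN := Finset.mem_range.mp hj
      have hcb := hCb j hjN
      have habs := abs_le.mp hcb
      refine hAj (c j) R₀ R T hR0 ?_ ?_
      · have := le_abs_self R₀; have := abs_nonneg R₀
        simp only [hTdef]; linarith [habs.2]
      · have := neg_abs_le R₀; have := abs_nonneg R₀
        simp only [hTdef]; linarith [habs.1, hRpos]
    calc (∑ j ∈ Finset.range N, ∫ a in R₀..R, ∫ s in (a + c j - 1)..(a + c j + 1), h s)
        ≤ ∑ j ∈ Finset.range N, 2 * (H T - H (-T)) := Finset.sum_le_sum h2
      _ = N * (2 * (H T - H (-T))) := by rw [Finset.sum_const, Finset.card_range, nsmul_eq_mul]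
  -- final numeric contradiction
  have hNR : (0:ℝ) < N := by exact_mod_cast hNpos
  have hfinal : ε * (R - R₀) ≤ (N:ℝ) * (2 * (2 * T * η)) := by
    have : H T - H (-T) ≤ 2 * T * η := by rw [hHT]; exact hIT
    nlinarith [hSint, hSub]
  have hη4 : (N:ℝ) * (2 * (2 * T * η)) = T * (ε/2) := by
    simp only [hηdef]; field_simp; ring
  rw [hη4] at hfinal
  -- T = R + |R₀| + C + 1, R = 2|R₀| + 2D + |T₀| + 5, D = |R₀| + C + 1
  have e1 : T = R + |R₀| + C + 1 := hTdef
  have e2 : R = 2*|R₀| + 2*D + |T₀| + 5 := hRdef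
  have e3 : D = |R₀| + C + 1 := hDdef
  have habs1 := le_abs_self R₀
  have habs2 := neg_abs_le R₀
  have habs3 := abs_nonneg T₀
  nlinarith [hfinal, hε, hCnn, abs_nonneg R₀]

/-- Key bound: the AA part of a PAA decomposition is dominated by the sup bound of the sum. -/
theorem aa_part_bound {g φ : ℝ → Z} (hg : AlmostAutomorphicFn g) (hφ : PAPZeroFn φ)
    {B : ℝ} (hB : ∀ t, ‖g t‖ ≤ B) {M : ℝ} (hM : ∀ t, ‖g t + φ t‖ ≤ M) :
    ∀ t₀ : ℝ, ‖g t₀‖ ≤ M := by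
  intro t₀
  set h : ℝ → ℝ := fun s => ‖φ s‖ with hhdef
  have hhc : Continuous h := hφ.1.norm
  have hhnn : ∀ x, 0 ≤ h x := fun x => norm_nonneg _
  have hmean := hφ.2.2
  have hint : ∀ a b : ℝ, IntervalIntegrable h volume a b := fun a b => hhc.intervalIntegrable a b
  set H : ℝ → ℝ := fun x => ∫ s in (0:ℝ)..x, h s with hHdef
  have hHdiff : ∀ x y : ℝ, H y - H x = ∫ s in x..y, h s := fun x y =>
    intervalIntegral.integral_interval_sub_left (hint 0 y) (hint 0 x)
  have hHmono : Monotone H := by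
    intro x y hxy
    have h1 := hHdiff x y
    have h2 : (0:ℝ) ≤ ∫ s in x..y, h s :=
      intervalIntegral.integral_nonneg hxy (fun u _ => hhnn u)
    linarith
  -- the recursively chosen sequence
  have key : ∀ (n : ℕ) (prev : ∀ j, j < n → ℝ), ∃ a : ℝ, (n:ℝ) ≤ a ∧
      (∫ s in (t₀ + a - 1)..(t₀ + a + 1), h s) < 1/(n+1) ∧
      ∀ j (hj : j < n), (∫ s in (t₀ + a - prev j hj - 1)..(t₀ + a - prev j hj + 1), h s)
        < 1/(n+1) := by
    intro n prev
    have hεp : (0:ℝ) < 1/(n+1) := by positivity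
    obtain ⟨a, ha, hall⟩ := window_small hhc hhnn hmean (n+1)
      (fun j => if hj : j < n then t₀ - prev j hj else t₀) hεp n
    refine ⟨a, ha, ?_, ?_⟩
    · have := hall n (Nat.lt_succ_self n)
      rw [dif_neg (lt_irrefl n)] at this
      have e : a + t₀ = t₀ + a := by ring
      rw [e] at this
      exact this
    · intro j hj
      have := hall j (Nat.lt_succ_of_lt hj)
      rw [dif_pos hj] at this
      have e1 : a + (t₀ - prev j hj) - 1 = t₀ + a - prev j hj - 1 := by ring
      have e2 : a + (t₀ - prev j hj) + 1 = t₀ + a - prev j hj + 1 := by ring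
      rw [e1, e2] at this
      exact this
  set s : ℕ → ℝ := depRec (fun n prev => (key n prev).choose) with hsdef
  have hseq : ∀ n, s n = (key n (fun j _ => s j)).choose := by
    intro n
    conv_lhs => rw [hsdef, depRec_eq]
  have hs2 : ∀ n, (∫ x in (t₀ + s n - 1)..(t₀ + s n + 1), h x) < 1/(n+1) := by
    intro n
    have := (key n (fun j _ => s j)).choose_spec.2.1
    rw [← hseq n] at this
    exact this
  have hs3 : ∀ n j, j < n → (∫ x in (t₀ + s n - s j - 1)..(t₀ + s n - s j + 1), h x)
      < 1/(n+1) := by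
    intro n j hj
    have := (key n (fun j _ => s j)).choose_spec.2.2 j hj
    rw [← hseq n] at this
    exact this
  -- apply almost automorphy along s
  obtain ⟨k, hk, gbar, conv1, conv2⟩ := hg.2 s
  have hgbarB : ∀ t, ‖gbar t‖ ≤ B := by
    intro t
    exact le_of_tendsto (conv1 t).norm (Eventually.of_forall fun m => hB _)
  have hgbarSM : StronglyMeasurable gbar := by
    refine stronglyMeasurable_of_tendsto atTop
      (f := fun m => fun t => g (t + s (k m))) (fun m => ?_) ?_
    · exact (hg.1.comp (continuous_id.add continuous_const)).stronglyMeasurable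
    · exact tendsto_pi_nhds.mpr conv1
  -- final estimate
  refine le_of_forall_pos_le_add ?_
  intro ε hε
  obtain ⟨δ₀, hδ₀, hδ₀p⟩ := Metric.continuousAt_iff.mp hg.1.continuousAt ε hε
  set δ : ℝ := min (δ₀/2) 1 with hδdef
  have hδpos : 0 < δ := by
    simp only [hδdef, lt_min_iff]; constructor <;> [linarith; norm_num]
  have hδ1 : δ ≤ 1 := min_le_right _ _
  have hδlt : δ < δ₀ := lt_of_le_of_lt (min_le_left _ _) (by linarith)
  have hgI : ∀ x ∈ Set.Icc (t₀ - δ) (t₀ + δ), ‖g t₀‖ - ε ≤ ‖g x‖ := by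
    intro x hx
    have hxd : |x - t₀| ≤ δ := abs_le.mpr ⟨by linarith [hx.1], by linarith [hx.2]⟩
    have hd : dist x t₀ < δ₀ := by rw [Real.dist_eq]; linarith [abs_le.mp hxd]
    have := hδ₀p hd
    rw [dist_eq_norm] at this
    have h2 := norm_sub_norm_le (g t₀) (g x)
    rw [norm_sub_rev] at h2
    linarith
  have lower : 2*δ*(‖g t₀‖ - ε) ≤ ∫ x in (t₀-δ)..(t₀+δ), ‖g x‖ := by
    have h1 : (∫ _ in (t₀-δ)..(t₀+δ), (‖g t₀‖ - ε)) = 2*δ*(‖g t₀‖ - ε) := by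
      rw [intervalIntegral.integral_const, smul_eq_mul]; ring
    rw [← h1]
    exact intervalIntegral.integral_mono_on (by linarith) intervalIntegrable_const
      (hg.1.norm.intervalIntegrable _ _) hgI
  -- per (n, m) estimate
  have perm : ∀ n m : ℕ, n < m →
      (∫ x in (t₀-δ)..(t₀+δ), ‖g (x - s (k n) + s (k m))‖) ≤ 2*δ*M + 1/(m+1) := by
    intro n m hnm
    set σ : ℝ := s (k m) - s (k n) with hσdef
    have e1 : (fun x => ‖g (x - s (k n) + s (k m))‖) = fun x => ‖g (x + σ)‖ := by
      funext x; congr 1; simp only [hσdef]; ring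
    rw [e1]
    have hcσ : Continuous fun x : ℝ => h (x + σ) := hhc.comp (continuous_add_right σ)
    have hgσ : Continuous fun x : ℝ => ‖g (x + σ)‖ := (hg.1.comp (continuous_add_right σ)).norm
    have step1 : (∫ x in (t₀-δ)..(t₀+δ), ‖g (x + σ)‖)
        ≤ ∫ x in (t₀-δ)..(t₀+δ), (M + h (x + σ)) := by
      refine intervalIntegral.integral_mono_on (by linarith)
        (hgσ.intervalIntegrable _ _)
        ((continuous_const.add hcσ).intervalIntegrable _ _)
        (fun x _ => ?_)
      have h1 := hM (x + σ)
      have h3 : ‖(g (x + σ) + φ (x + σ)) - φ (x + σ)‖ ≤ ‖g (x + σ) + φ (x + σ)‖ + ‖φ (x + σ)‖ :=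
        norm_sub_le _ _
      simp only [add_sub_cancel_right] at h3
      simp only [hhdef]
      linarith
    have step2 : (∫ x in (t₀-δ)..(t₀+δ), (M + h (x + σ))) = 2*δ*M + ∫ x in (t₀-δ)..(t₀+δ), h (x + σ) := by
      rw [intervalIntegral.integral_add intervalIntegrable_const
        (hcσ.intervalIntegrable _ _),
        intervalIntegral.integral_const, smul_eq_mul]
      ring
    have step3 : (∫ x in (t₀-δ)..(t₀+δ), h (x + σ)) = ∫ x in (t₀-δ+σ)..(t₀+δ+σ), h x :=
      intervalIntegral.integral_comp_add_right h σ
    have step4 : (∫ x in (t₀-δ+σ)..(t₀+δ+σ), h x) ≤ ∫ x in (t₀+σ-1)..(t₀+σ+1), h x := by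
      have d1 := hHdiff (t₀-δ+σ) (t₀+δ+σ)
      have d2 := hHdiff (t₀+σ-1) (t₀+σ+1)
      have m1 : H (t₀+δ+σ) ≤ H (t₀+σ+1) := hHmono (by linarith)
      have m2 : H (t₀+σ-1) ≤ H (t₀-δ+σ) := hHmono (by linarith)
      linarith
    have step5 : (∫ x in (t₀+σ-1)..(t₀+σ+1), h x) < 1/(m+1) := by
      have hkm : k n < k m := hk hnm
      have h1 := hs3 (k m) (k n) hkm
      have e2 : t₀ + s (k m) - s (k n) - 1 = t₀ + σ - 1 := by simp only [hσdef]; ring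
      have e3 : t₀ + s (k m) - s (k n) + 1 = t₀ + σ + 1 := by simp only [hσdef]; ring
      rw [e2, e3] at h1
      have hmk : (m:ℝ) + 1 ≤ (k m : ℝ) + 1 := by
        have := hk.id_le m
        exact_mod_cast Nat.succ_le_succ this
      have : 1/((k m : ℝ)+1) ≤ 1/((m:ℝ)+1) := by
        apply one_div_le_one_div_of_le
        · positivity
        · exact hmk
      calc (∫ x in (t₀+σ-1)..(t₀+σ+1), h x) < 1/((k m : ℝ)+1) := by exact_mod_cast h1
        _ ≤ 1/((m:ℝ)+1) := this
    rw [step2, step3] at step1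
    linarith [step4, step5]
  -- inner DCT: m → ∞
  have innerlim : ∀ n : ℕ, Tendsto (fun m => ∫ x in (t₀-δ)..(t₀+δ), ‖g (x - s (k n) + s (k m))‖)
      atTop (𝓝 (∫ x in (t₀-δ)..(t₀+δ), ‖gbar (x - s (k n))‖)) := by
    intro n
    refine intervalIntegral.tendsto_integral_filter_of_dominated_convergence (fun _ => B)
      ?_ ?_ intervalIntegrable_const ?_
    · exact Eventually.of_forall fun m =>
        ((hg.1.norm.comp ((continuous_id.sub continuous_const).add continuous_const))).aestronglyMeasurable
    · exact Eventually.of_forall fun m => ae_of_all _ fun x _ => by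
        rw [Real.norm_eq_abs, abs_of_nonneg (norm_nonneg _)]; exact hB _
    · exact ae_of_all _ fun x _ => (conv1 (x - s (k n))).norm
  have innerbound : ∀ n : ℕ, (∫ x in (t₀-δ)..(t₀+δ), ‖gbar (x - s (k n))‖) ≤ 2*δ*M := by
    intro n
    have htail : Tendsto (fun m : ℕ => 2*δ*M + 1/((m:ℝ)+1)) atTop (𝓝 (2*δ*M)) := by
      have : Tendsto (fun m : ℕ => 1/((m:ℝ)+1)) atTop (𝓝 0) :=
        tendsto_one_div_add_atTop_nhds_zero_nat
      simpa using tendsto_const_nhds.add this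
    refine le_of_tendsto_of_tendsto (innerlim n) htail ?_
    filter_upwards [eventually_gt_atTop n] with m hm
    exact perm n m hm
  -- outer DCT: n → ∞
  have outerlim : Tendsto (fun n => ∫ x in (t₀-δ)..(t₀+δ), ‖gbar (x - s (k n))‖)
      atTop (𝓝 (∫ x in (t₀-δ)..(t₀+δ), ‖g x‖)) := by
    refine intervalIntegral.tendsto_integral_filter_of_dominated_convergence (fun _ => B)
      ?_ ?_ intervalIntegrable_const ?_
    · refine Eventually.of_forall fun n => ?_
      exact ((hgbarSM.comp_measurable (measurable_id.sub_const _)).norm).aestronglyMeasurable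
    · exact Eventually.of_forall fun n => ae_of_all _ fun x _ => by
        rw [Real.norm_eq_abs, abs_of_nonneg (norm_nonneg _)]; exact hgbarB _
    · exact ae_of_all _ fun x _ => (conv2 x).norm
  have upper : (∫ x in (t₀-δ)..(t₀+δ), ‖g x‖) ≤ 2*δ*M :=
    le_of_tendsto' outerlim innerbound
  -- conclude
  have : 2*δ*(‖g t₀‖ - ε) ≤ 2*δ*M := le_trans lower upper
  have h2δ : 0 < 2*δ := by linarith
  nlinarith

end PAAHelp


theorem PAA_closed_subspace_of_BC
    {X : Type*} [NormedAddCommGroup X] [NormedSpace ℝ X] [CompleteSpace X] :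
    IsClosed {f : BoundedContinuousFunction ℝ X |
      PseudoAlmostAutomorphicFn (fun t : ℝ => f t)} ∧
    IsComplete {f : BoundedContinuousFunction ℝ X |
      PseudoAlmostAutomorphicFn (fun t : ℝ => f t)} ∧
    PseudoAlmostAutomorphicFn (fun t : ℝ => (0 : BoundedContinuousFunction ℝ X) t) ∧
    (∀ f g : BoundedContinuousFunction ℝ X,
      PseudoAlmostAutomorphicFn (fun t : ℝ => f t) →
      PseudoAlmostAutomorphicFn (fun t : ℝ => g t) →
      PseudoAlmostAutomorphicFn (fun t : ℝ => (f + g) t)) ∧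
    (∀ (a : ℝ) (f : BoundedContinuousFunction ℝ X),
      PseudoAlmostAutomorphicFn (fun t : ℝ => f t) →
      PseudoAlmostAutomorphicFn (fun t : ℝ => (a • f) t)) ∧
    (∀ (F : ℕ → BoundedContinuousFunction ℝ X) (f : BoundedContinuousFunction ℝ X),
      (∀ n : ℕ, PseudoAlmostAutomorphicFn (fun t : ℝ => F n t)) →
      Tendsto F atTop (𝓝 f) →
      PseudoAlmostAutomorphicFn (fun t : ℝ => f t)) := by
  -- the sequential (uniform-limit) statement, proven first
  have W : ∀ (F : ℕ → BoundedContinuousFunction ℝ X) (f : BoundedContinuousFunction ℝ X),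
      (∀ n : ℕ, PseudoAlmostAutomorphicFn (fun t : ℝ => F n t)) →
      Tendsto F atTop (𝓝 f) →
      PseudoAlmostAutomorphicFn (fun t : ℝ => f t) := by
    intro F f hF hFf
    choose g φ hgaa hφz hdec0 using fun n => (hF n).2.2
    have hdec : ∀ n t, F n t = g n t + φ n t := fun n t => hdec0 n t
    -- bounds for the AA parts
    have hgB : ∀ n, ∀ t, ‖g n t‖ ≤ ‖F n‖ + Classical.choose (hφz n).2.1 := by
      intro n t
      have h1 := hdec n t
      have h2 := Classical.choose_spec (hφz n).2.1 t
      have h3 : ‖g n t‖ ≤ ‖F n t‖ + ‖φ n t‖ := by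
        have : ‖(g n t + φ n t) - φ n t‖ ≤ ‖g n t + φ n t‖ + ‖φ n t‖ := norm_sub_le _ _
        simp only [add_sub_cancel_right] at this
        rw [← h1] at this
        exact this
      have h4 := (F n).norm_coe_le_norm t
      linarith
    -- Cauchy estimate on the AA parts via the key bound
    have hCau : ∀ n m : ℕ, ∀ t, ‖g n t - g m t‖ ≤ dist (F n) (F m) := by
      intro n m
      refine PAAHelp.aa_part_bound (PAAHelp.aa_sub (hgaa n) (hgaa m))
        (PAAHelp.papzero_sub (hφz n) (hφz m))
        (B := ‖F n‖ + Classical.choose (hφz n).2.1 + (‖F m‖ + Classical.choose (hφz m).2.1))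
        (fun t => ?_) (M := dist (F n) (F m)) (fun t => ?_)
      · have := hgB n t; have := hgB m t
        have h5 : ‖g n t - g m t‖ ≤ ‖g n t‖ + ‖g m t‖ := norm_sub_le _ _
        linarith
      · have e1 : g n t - g m t + (φ n t - φ m t) = F n t - F m t := by
          rw [hdec n t, hdec m t]; abel
        rw [e1]
        have h6 := BoundedContinuousFunction.dist_coe_le_dist (f := F n) (g := F m) t
        rw [dist_eq_norm] at h6
        exact h6
    have hFCau : CauchySeq F := hFf.cauchySeq
    rw [Metric.cauchySeq_iff] at hFCau
    have hcau' : ∀ ε > 0, ∃ N, ∀ n ≥ N, ∀ m ≥ N, ∀ t, ‖g n t - g m t‖ ≤ ε := by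
      intro ε hε
      obtain ⟨N, hN⟩ := hFCau ε hε
      exact ⟨N, fun n hn m hm t =>
        le_of_lt (lt_of_le_of_lt (hCau n m t) (hN n hn m hm))⟩
    -- pointwise limit G
    have hcs : ∀ t, ∃ L : X, Tendsto (fun n => g n t) atTop (𝓝 L) := by
      intro t
      apply cauchySeq_tendsto_of_complete
      rw [Metric.cauchySeq_iff']
      intro ε hε
      obtain ⟨N, hN⟩ := hcau' (ε/2) (by linarith)
      exact ⟨N, fun n hn => by
        rw [dist_eq_norm]
        exact lt_of_le_of_lt (hN n hn N le_rfl t) (by linarith)⟩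
    choose G hG using hcs
    have hGa : ∀ ε > 0, ∃ N, ∀ n ≥ N, ∀ t, ‖g n t - G t‖ ≤ ε := by
      intro ε hε
      obtain ⟨N, hN⟩ := hcau' ε hε
      refine ⟨N, fun n hn t => ?_⟩
      have h1 : Tendsto (fun m => ‖g n t - g m t‖) atTop (𝓝 ‖g n t - G t‖) :=
        (tendsto_const_nhds.sub (hG t)).norm
      refine le_of_tendsto h1 ?_
      filter_upwards [eventually_ge_atTop N] with m hm
      exact hN n hn m hm t
    -- continuity of G via uniform convergence
    have hGtu : TendstoUniformly (fun n => g n) G atTop := by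
      rw [Metric.tendstoUniformly_iff]
      intro ε hε
      obtain ⟨N, hN⟩ := hGa (ε/2) (by linarith)
      filter_upwards [eventually_ge_atTop N] with n hn t
      rw [dist_eq_norm, norm_sub_rev]
      exact lt_of_le_of_lt (hN n hn t) (by linarith)
    have hGc : Continuous G :=
      hGtu.continuous (Frequently.of_forall fun n => (hgaa n).1)
    have hGaa : AlmostAutomorphicFn G := PAAHelp.aa_unif hgaa hGc hGa
    -- the ergodic part
    set Φ : ℝ → X := fun t => f t - G t with hΦdef
    have hΦc : Continuous Φ := f.continuous.sub hGc
    have hΦb : ∃ M : ℝ, ∀ t, ‖Φ t‖ ≤ M := by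
      obtain ⟨N, hN⟩ := hGa 1 one_pos
      refine ⟨‖f‖ + (‖F N‖ + Classical.choose (hφz N).2.1) + 1, fun t => ?_⟩
      have h1 : ‖Φ t‖ ≤ ‖f t‖ + ‖G t‖ := norm_sub_le _ _
      have h2 : ‖G t‖ ≤ ‖g N t‖ + ‖g N t - G t‖ := by
        have : ‖g N t - (g N t - G t)‖ ≤ ‖g N t‖ + ‖g N t - G t‖ := norm_sub_le _ _
        simpa using this
      have h3 := hN N le_rfl t
      have h4 := hgB N t
      have h5 := f.norm_coe_le_norm t
      linarith
    have hΦu : ∀ ε > 0, ∃ N, ∀ n ≥ N, ∀ t, ‖φ n t - Φ t‖ ≤ ε := by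
      intro ε hε
      obtain ⟨N₁, hN₁⟩ := hGa (ε/2) (by linarith)
      rw [Metric.tendsto_atTop] at hFf
      obtain ⟨N₂, hN₂⟩ := hFf (ε/2) (by linarith)
      refine ⟨max N₁ N₂, fun n hn t => ?_⟩
      have e1 : φ n t - Φ t = (F n t - f t) - (g n t - G t) := by
        have := hdec n t
        simp only [hΦdef]
        rw [this]; abel
      rw [e1]
      have h1 : ‖F n t - f t‖ ≤ ε/2 := by
        have h0 := hN₂ n (le_trans (le_max_right _ _) hn)
        have h2 := BoundedContinuousFunction.dist_coe_le_dist (f := F n) (g := f) t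
        rw [dist_eq_norm] at h2
        exact le_of_lt (lt_of_le_of_lt h2 h0)
      have h3 := hN₁ n (le_trans (le_max_left _ _) hn) t
      calc ‖(F n t - f t) - (g n t - G t)‖ ≤ ‖F n t - f t‖ + ‖g n t - G t‖ := norm_sub_le _ _
        _ ≤ ε/2 + ε/2 := add_le_add h1 h3
        _ = ε := by ring
    have hΦz : PAPZeroFn Φ := PAAHelp.papzero_unif hφz hΦc hΦb hΦu
    exact ⟨f.continuous, ⟨‖f‖, fun t => f.norm_coe_le_norm t⟩, G, Φ, hGaa, hΦz,
      fun t => by simp only [hΦdef]; abel⟩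
  -- closedness
  have hclosed : IsClosed {f : BoundedContinuousFunction ℝ X |
      PseudoAlmostAutomorphicFn (fun t : ℝ => f t)} := by
    refine IsSeqClosed.isClosed ?_
    intro F f hF hFf
    exact W F f hF hFf
  refine ⟨hclosed, hclosed.isComplete, ?_, ?_, ?_, W⟩
  · -- zero
    have e : (fun t : ℝ => (0 : BoundedContinuousFunction ℝ X) t) = fun _ : ℝ => (0 : X) := by
      funext t; simp
    rw [e]
    exact ⟨continuous_const, ⟨0, fun t => by simp⟩, (fun _ => 0), (fun _ => 0),
      PAAHelp.aa_zero, PAAHelp.papzero_zero, fun t => by simp⟩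
  · -- addition
    intro f g hf hg
    obtain ⟨-, -, gf, φf, hgf, hφf, hdf0⟩ := hf
    obtain ⟨-, -, gg, φg, hgg, hφg, hdg0⟩ := hg
    have hdf : ∀ t, f t = gf t + φf t := fun t => hdf0 t
    have hdg : ∀ t, g t = gg t + φg t := fun t => hdg0 t
    refine ⟨(f + g).continuous, ⟨‖f + g‖, fun t => (f + g).norm_coe_le_norm t⟩,
      fun t => gf t + gg t, fun t => φf t + φg t,
      PAAHelp.aa_add hgf hgg, PAAHelp.papzero_add hφf hφg, fun t => ?_⟩
    show (f + g) t = (gf t + gg t) + (φf t + φg t)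
    have e : (f + g) t = f t + g t := rfl
    rw [e, hdf t, hdg t]; abel
  · -- scalar multiplication
    intro a f hf
    obtain ⟨-, -, gf, φf, hgf, hφf, hdf0⟩ := hf
    have hdf : ∀ t, f t = gf t + φf t := fun t => hdf0 t
    refine ⟨(a • f).continuous, ⟨‖a • f‖, fun t => (a • f).norm_coe_le_norm t⟩,
      fun t => a • gf t, fun t => a • φf t,
      PAAHelp.aa_smul a hgf, PAAHelp.papzero_smul a hφf, fun t => ?_⟩
    show (a • f) t = a • gf t + a • φf t
    have e : (a • f) t = a • (f t) := rfl
    rw [e, hdf t, smul_add]
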